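/- arXiv:1601.03585 — 2 statements merged into one kernel-verified Lean document; each statement's English description precedes it below -/
import Mathlib

section
/- Hadamard's three circle theorem: let 0 < r₁ < r₂ < r₃ and let f be holomorphic on an open neighborhood of the closed annulus {z ∈ ℂ : r₁ ≤ |z| ≤ r₃}. Set M(r) = max_{|z|=r} |f(z)|. Then log(r₃/r₁) · log M(r₂) ≤ log(r₃/r₂) · log M(r₁) + log(r₂/r₁) · log M(r₃); equivalently, M(r₂)^{log(r₃/r₁)} ≤ M(r₁)^{log(r₃/r₂)} · M(r₃)^{log(r₂/r₁)}. -/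
open Set

set_option maxHeartbeats 1000000

/-- Hadamard's three circle theorem. -/
theorem stmt_6 (r₁ r₂ r₃ : ℝ) (h1 : 0 < r₁) (h12 : r₁ < r₂) (h23 : r₂ < r₃)
    (U : Set ℂ) (hU : IsOpen U)
    (hsub : {z : ℂ | r₁ ≤ ‖z‖ ∧ ‖z‖ ≤ r₃} ⊆ U)
    (f : ℂ → ℂ) (hf : DifferentiableOn ℂ f U)
    (M : ℝ → ℝ) (hM : ∀ r : ℝ, M r = sSup ((fun z => ‖f z‖) '' {z : ℂ | ‖z‖ = r})) :
    Real.log (r₃ / r₁) * Real.log (M r₂) ≤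
      Real.log (r₃ / r₂) * Real.log (M r₁) + Real.log (r₂ / r₁) * Real.log (M r₃) := by
  have h2 : 0 < r₂ := h1.trans h12
  have h3 : 0 < r₃ := h2.trans h23
  set a := Real.log r₁ with ha_def
  set b := Real.log r₂ with hb_def
  set c := Real.log r₃ with hc_def
  have hab : a < b := Real.log_lt_log h1 h12
  have hbc : b < c := Real.log_lt_log h2 h23
  have hca : (0:ℝ) < c - a := by linarith
  set t : ℝ := (b - a) / (c - a) with ht_def
  have ht0 : 0 < t := div_pos (by linarith) hca
  have ht1 : t < 1 := (div_lt_one hca).2 (by linarith)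
  have htca : t * (c - a) = b - a := div_mul_cancel₀ _ hca.ne'
  set K : Set ℂ := {z : ℂ | r₁ ≤ ‖z‖ ∧ ‖z‖ ≤ r₃} with hK_def
  have hKclosed : IsClosed K := by
    have : K = {z : ℂ | r₁ ≤ ‖z‖} ∩ {z : ℂ | ‖z‖ ≤ r₃} := rfl
    rw [this]
    exact (isClosed_le continuous_const continuous_norm).inter
      (isClosed_le continuous_norm continuous_const)
  have hKc : IsCompact K := by
    refine (isCompact_closedBall (0:ℂ) r₃).of_isClosed_subset hKclosed ?_
    intro z hz
    simpa [Metric.mem_closedBall, Complex.dist_eq] using hz.2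
  -- basic facts about circles and M
  have hcircK : ∀ r : ℝ, r₁ ≤ r → r ≤ r₃ → {z : ℂ | ‖z‖ = r} ⊆ K := by
    intro r hr1 hr3 z hz
    exact ⟨hz ▸ hr1, hz ▸ hr3⟩
  have hbdd : ∀ r : ℝ, r₁ ≤ r → r ≤ r₃ →
      BddAbove ((fun z => ‖f z‖) '' {z : ℂ | ‖z‖ = r}) := by
    intro r hr1 hr3
    have hc1 : IsCompact {z : ℂ | ‖z‖ = r} :=
      hKc.of_isClosed_subset (isClosed_eq continuous_norm continuous_const)
        (hcircK r hr1 hr3)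
    have hcf : ContinuousOn (fun z => ‖f z‖) {z : ℂ | ‖z‖ = r} :=
      continuous_norm.comp_continuousOn
        (hf.continuousOn.mono ((hcircK r hr1 hr3).trans hsub))
    exact (hc1.image_of_continuousOn hcf).bddAbove
  have hMle : ∀ r : ℝ, r₁ ≤ r → r ≤ r₃ → ∀ z : ℂ, ‖z‖ = r →
      ‖f z‖ ≤ M r := by
    intro r hr1 hr3 z hz
    rw [hM]
    exact le_csSup (hbdd r hr1 hr3) ⟨z, hz, rfl⟩
  have hMnonneg : ∀ r : ℝ, 0 ≤ M r := by
    intro r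
    rw [hM]
    exact Real.sSup_nonneg fun x ⟨z, _, hzx⟩ => hzx ▸ norm_nonneg _
  -- the exponential parametrization
  set φ : ℂ → ℂ := fun w => Complex.exp ((a : ℂ) + w * ((c - a : ℝ) : ℂ)) with hφ_def
  have hφd : Differentiable ℂ φ :=
    (Complex.differentiable_exp.comp
      ((differentiable_const _).add (differentiable_id.mul (differentiable_const _))))
  have hφabs : ∀ w : ℂ, ‖φ w‖ = Real.exp (a + w.re * (c - a)) := by
    intro w
    rw [hφ_def, Complex.norm_exp]
    congr 1
    simp [Complex.add_re, Complex.mul_re]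
  have e1 : Real.exp a = r₁ := Real.exp_log h1
  have e2 : Real.exp b = r₂ := Real.exp_log h2
  have e3 : Real.exp c = r₃ := Real.exp_log h3
  have hφK : ∀ w : ℂ, w.re ∈ Icc (0:ℝ) 1 → φ w ∈ K := by
    intro w hw
    rw [hK_def, mem_setOf_eq, hφabs w]
    constructor
    · rw [← e1]
      apply Real.exp_le_exp.2
      nlinarith [hw.1]
    · rw [← e3]
      apply Real.exp_le_exp.2
      nlinarith [hw.2]
  set g : ℂ → ℂ := f ∘ φ with hg_def
  have hgd : DifferentiableOn ℂ g (φ ⁻¹' U) :=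
    hf.comp hφd.differentiableOn (fun w hw => hw)
  have hstrip_sub : Complex.HadamardThreeLines.verticalClosedStrip 0 1 ⊆ φ ⁻¹' U := by
    intro w hw
    exact hsub (hφK w hw)
  have hclosure : closure (Complex.HadamardThreeLines.verticalStrip 0 1) ⊆
      Complex.HadamardThreeLines.verticalClosedStrip 0 1 := by
    apply closure_minimal
    · exact fun w hw => ⟨hw.1.le, hw.2.le⟩
    · exact IsClosed.preimage Complex.continuous_re isClosed_Icc
  have hDiff : DiffContOnCl ℂ g (Complex.HadamardThreeLines.verticalStrip 0 1) := by
    constructor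
    · exact hgd.mono fun w hw => hstrip_sub ⟨hw.1.le, hw.2.le⟩
    · exact hgd.continuousOn.mono (hclosure.trans hstrip_sub)
  have hB : BddAbove ((norm ∘ g) '' Complex.HadamardThreeLines.verticalClosedStrip 0 1) := by
    have himg : (norm ∘ g) '' Complex.HadamardThreeLines.verticalClosedStrip 0 1 ⊆
        (fun z => ‖f z‖) '' K := by
      rintro x ⟨w, hw, rfl⟩
      exact ⟨φ w, hφK w hw, rfl⟩
    have hKim : IsCompact ((fun z => ‖f z‖) '' K) :=
      hKc.image_of_continuousOn
        (continuous_norm.comp_continuousOn (hf.continuousOn.mono hsub))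
    exact hKim.bddAbove.mono himg
  have hedge0 : ∀ w : ℂ, w ∈ Complex.re ⁻¹' {(0:ℝ)} → ‖g w‖ ≤ M r₁ := by
    intro w hw
    have hrw : w.re = 0 := hw
    have : ‖φ w‖ = r₁ := by rw [hφabs w, hrw]; simpa using e1
    exact hMle r₁ le_rfl (by linarith) (φ w) this
  have hedge1 : ∀ w : ℂ, w ∈ Complex.re ⁻¹' {(1:ℝ)} → ‖g w‖ ≤ M r₃ := by
    intro w hw
    have hrw : w.re = 1 := hw
    have : ‖φ w‖ = r₃ := by rw [hφabs w, hrw]; simpa using e3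
    exact hMle r₃ (by linarith) le_rfl (φ w) this
  -- key pointwise bound on the middle circle
  have hkey : ∀ z : ℂ, ‖z‖ = r₂ →
      ‖f z‖ ≤ M r₁ ^ (1 - t) * M r₃ ^ t := by
    intro z hz
    have hca' : ((c - a : ℝ) : ℂ) ≠ 0 := by
      exact_mod_cast hca.ne'
    set w : ℂ := (((b - a : ℝ) : ℂ) + (z.arg : ℂ) * Complex.I) / ((c - a : ℝ) : ℂ) with hw_def
    have hwre : w.re = t := by
      rw [hw_def, Complex.div_ofReal_re]
      simp [ht_def]
    have hφw : φ w = z := by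
      have harg : (a : ℂ) + w * ((c - a : ℝ) : ℂ) = ((b : ℝ) : ℂ) + (z.arg : ℂ) * Complex.I := by
        rw [hw_def, div_mul_cancel₀ _ hca']
        push_cast
        ring
      rw [hφ_def]
      simp only
      rw [harg, Complex.exp_add, ← Complex.ofReal_exp, e2, ← hz,
        Complex.norm_mul_exp_arg_mul_I z]
    have hwmem : w ∈ Complex.HadamardThreeLines.verticalClosedStrip 0 1 := by
      show w.re ∈ Icc (0:ℝ) 1
      rw [hwre]
      exact ⟨ht0.le, ht1.le⟩
    have := Complex.HadamardThreeLines.norm_le_interp_of_mem_verticalClosedStrip' (f := g) zero_lt_one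
      hwmem hDiff hB hedge0 hedge1
    rw [hwre, sub_zero, sub_zero, div_one] at this
    calc ‖f z‖ = ‖g w‖ := by rw [hg_def]; simp [hφw]
      _ ≤ M r₁ ^ (1 - t) * M r₃ ^ t := this
  have hM2bound : M r₂ ≤ M r₁ ^ (1 - t) * M r₃ ^ t := by
    rw [hM]
    apply Real.sSup_le
    · rintro x ⟨z, hz, rfl⟩
      exact hkey z hz
    · exact mul_nonneg (Real.rpow_nonneg (hMnonneg _) _) (Real.rpow_nonneg (hMnonneg _) _)
  -- rewrite the goal in terms of a, b, c
  rw [Real.log_div h3.ne' h1.ne', Real.log_div h3.ne' h2.ne', Real.log_div h2.ne' h1.ne']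
  rcases (hMnonneg r₂).eq_or_lt with hM2 | hM2
  · -- degenerate case : f vanishes on the circle of radius r₂
    have hzero2 : ∀ z : ℂ, ‖z‖ = r₂ → f z = 0 := by
      intro z hz
      have h := hMle r₂ h12.le h23.le z hz
      rw [← hM2] at h
      have := norm_nonneg (f z)
      have : ‖f z‖ = 0 := le_antisymm h this
      exact norm_eq_zero.1 this
    set A : Set ℂ := {z : ℂ | r₁ < ‖z‖ ∧ ‖z‖ < r₃} with hA_def
    have hAK : A ⊆ K := fun z hz => ⟨hz.1.le, hz.2.le⟩
    have hA_pre : IsPreconnected A := by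
      have hconv : Convex ℝ {w : ℂ | a < w.re ∧ w.re < c} :=
        (convex_halfSpace_re_gt a).inter (convex_halfSpace_re_lt c)
      have hpath : IsPathConnected {w : ℂ | a < w.re ∧ w.re < c} :=
        hconv.isPathConnected ⟨(b : ℂ), by simp [hab, hbc]⟩
      have himg : Complex.exp '' {w : ℂ | a < w.re ∧ w.re < c} = A := by
        ext z
        constructor
        · rintro ⟨w, ⟨hw1, hw2⟩, rfl⟩
          rw [hA_def, mem_setOf_eq, Complex.norm_exp]
          exact ⟨e1 ▸ Real.exp_lt_exp.2 hw1, e3 ▸ Real.exp_lt_exp.2 hw2⟩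
        · intro hzm
          obtain ⟨hz1, hz3⟩ := hzm
          have hz0 : z ≠ 0 := by
            intro h
            rw [h] at hz1
            simp at hz1
            linarith
          have : z ∈ Set.range Complex.exp := by
            rw [Complex.range_exp]
            exact hz0
          obtain ⟨w, rfl⟩ := this
          rw [Complex.norm_exp] at hz1 hz3
          refine ⟨w, ⟨?_, ?_⟩, rfl⟩
          · have := Real.log_lt_log h1 hz1
            rwa [Real.log_exp] at this
          · have := Real.log_lt_log (Real.exp_pos _) hz3
            rwa [Real.log_exp] at this
      rw [← himg]
      exact ((hpath.image Complex.continuous_exp).isConnected).isPreconnected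
    have hfana : AnalyticOnNhd ℂ f A :=
      (hf.analyticOnNhd hU).mono (hAK.trans hsub)
    have hz₀A : (r₂ : ℂ) ∈ A := by
      rw [hA_def, mem_setOf_eq, Complex.norm_of_nonneg h2.le]
      exact ⟨h12, h23⟩
    have hfreq : ∃ᶠ z in nhdsWithin (r₂ : ℂ) {(r₂ : ℂ)}ᶜ, f z = 0 := by
      have htd : Filter.Tendsto (fun θ : ℝ => (r₂ : ℂ) * Complex.exp ((θ : ℂ) * Complex.I))
          (nhdsWithin 0 (Ioi 0)) (nhdsWithin (r₂ : ℂ) {(r₂ : ℂ)}ᶜ) := by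
        apply tendsto_nhdsWithin_of_tendsto_nhds_of_eventually_within
        · have hc : Continuous fun θ : ℝ => (r₂ : ℂ) * Complex.exp ((θ : ℂ) * Complex.I) :=
            continuous_const.mul
              (Complex.continuous_exp.comp (Complex.continuous_ofReal.mul continuous_const))
          have h0 : (fun θ : ℝ => (r₂ : ℂ) * Complex.exp ((θ : ℂ) * Complex.I)) 0 = (r₂ : ℂ) := by
            simp
          exact (hc.tendsto' 0 _ h0).mono_left nhdsWithin_le_nhds
        · filter_upwards [Ioo_mem_nhdsGT_of_mem (by constructor <;> norm_num :
            (0:ℝ) ∈ Ico (0:ℝ) 1)] with θ hθ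
          intro hcon
          simp only [mem_compl_iff, mem_singleton_iff] at hcon
          have hr₂ne : ((r₂ : ℝ) : ℂ) ≠ 0 := by exact_mod_cast h2.ne'
          have hexp1 : Complex.exp ((θ : ℂ) * Complex.I) = 1 :=
            mul_left_cancel₀ hr₂ne (hcon.trans (mul_one _).symm)
          rw [Complex.exp_eq_one_iff] at hexp1
          obtain ⟨n, hn⟩ := hexp1
          have him : θ = (n : ℝ) * (2 * Real.pi) := by
            have := congrArg Complex.im hn
            simpa using this
          rcases le_or_gt 1 n with hn1 | hn1
          · have : (1:ℝ) ≤ (n:ℝ) := by exact_mod_cast hn1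
            nlinarith [Real.pi_gt_three, hθ.2]
          · have hn0 : n ≤ 0 := by omega
            have : (n:ℝ) ≤ 0 := by exact_mod_cast hn0
            nlinarith [Real.pi_gt_three, hθ.1]
      apply htd.frequently
      apply Filter.Eventually.frequently
      filter_upwards [self_mem_nhdsWithin] with θ _
      apply hzero2
      rw [norm_mul, Complex.norm_of_nonneg h2.le, Complex.norm_exp]
      simp
    have hEq : Set.EqOn f 0 A :=
      hfana.eqOn_zero_of_preconnected_of_frequently_eq_zero hA_pre hz₀A hfreq
    have hbdry : ∀ z₀ : ℂ, ‖z₀‖ = r₁ ∨ ‖z₀‖ = r₃ → f z₀ = 0 := by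
      intro z₀ hz₀
      set ρ := ‖z₀‖ with hρ_def
      have hρ1 : r₁ ≤ ρ := by
        rcases hz₀ with h | h
        · exact h.ge
        · rw [h]; linarith
      have hρ3 : ρ ≤ r₃ := by
        rcases hz₀ with h | h
        · rw [h]; linarith
        · exact h.le
      have hρpos : 0 < ρ := lt_of_lt_of_le h1 hρ1
      have hz₀0 : z₀ ≠ 0 := by
        intro h
        apply hρpos.ne'
        rw [hρ_def, h, norm_zero]
      set k : ℝ := r₂ / ρ with hk_def
      have hkpos : 0 < k := div_pos h2 hρpos
      have hkρ : k * ρ = r₂ := div_mul_cancel₀ _ hρpos.ne'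
      have hkne : k ≠ 1 := by
        rcases hz₀ with h | h
        · rw [hk_def, h]
          intro hc
          rw [div_eq_one_iff_eq h1.ne'] at hc
          linarith
        · rw [hk_def, h]
          intro hc
          rw [div_eq_one_iff_eq h3.ne'] at hc
          linarith
      set γ : ℝ → ℂ := fun s => z₀ * ((((1 - s) + s * k : ℝ)) : ℂ) with hγ_def
      have hγabs : ∀ s : ℝ, s ∈ Ioo (0:ℝ) 1 → ‖γ s‖ = (1 - s) * ρ + s * r₂ := by
        intro s hs
        rw [hγ_def]
        simp only
        rw [norm_mul, Complex.norm_real, Real.norm_eq_abs,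
          abs_of_pos (by nlinarith [hs.1, hs.2, hkpos] : (0:ℝ) < (1 - s) + s * k), ← hρ_def]
        linear_combination s * hkρ
      have htd2 : Filter.Tendsto γ (nhdsWithin 0 (Ioi 0)) (nhdsWithin z₀ {z₀}ᶜ) := by
        apply tendsto_nhdsWithin_of_tendsto_nhds_of_eventually_within
        · have hc : Continuous γ :=
            continuous_const.mul (Complex.continuous_ofReal.comp
              ((continuous_const.sub continuous_id).add (continuous_id.mul continuous_const)))
          have h0 : γ 0 = z₀ := by rw [hγ_def]; simp
          exact (hc.tendsto' 0 _ h0).mono_left nhdsWithin_le_nhds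
        · filter_upwards [self_mem_nhdsWithin] with s hs
          intro hcon
          simp only [mem_compl_iff, mem_singleton_iff] at hcon
          rw [hγ_def] at hcon
          simp only at hcon
          have hx : (((1 - s) + s * k : ℝ) : ℂ) = 1 :=
            mul_left_cancel₀ hz₀0 (hcon.trans (mul_one z₀).symm)
          have hx' : (1 - s) + s * k = 1 := by exact_mod_cast hx
          have hs0 : (0:ℝ) < s := hs
          have hzero' : s * (k - 1) = 0 := by linarith
          rcases mul_eq_zero.1 hzero' with h | h
          · linarith
          · exact hkne (by linarith)
      have hfreq2 : ∃ᶠ z in nhdsWithin z₀ {z₀}ᶜ, f z = 0 := by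
        apply htd2.frequently
        apply Filter.Eventually.frequently
        filter_upwards [Ioo_mem_nhdsGT_of_mem (by constructor <;> norm_num :
          (0:ℝ) ∈ Ico (0:ℝ) 1)] with s hs
        have hmem : γ s ∈ A := by
          rw [hA_def, mem_setOf_eq, hγabs s hs]
          constructor
          · nlinarith [hs.1, hs.2, hρ1, h12]
          · nlinarith [hs.1, hs.2, hρ3, h23]
        simpa using hEq hmem
      have hana : AnalyticAt ℂ f z₀ :=
        (hf.analyticOnNhd hU) z₀ (hsub ⟨hρ1, hρ3⟩)
      exact ((hana.frequently_zero_iff_eventually_zero).1 hfreq2).self_of_nhds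
    have hM0 : ∀ r : ℝ, (∀ z : ℂ, ‖z‖ = r → f z = 0) → M r = 0 := by
      intro r hzero
      rw [hM]
      apply le_antisymm
      · apply Real.sSup_le
        · rintro x ⟨z, hz, rfl⟩
          simp [hzero z hz]
        · exact le_rfl
      · exact Real.sSup_nonneg fun x ⟨z, _, hzx⟩ => hzx ▸ norm_nonneg _
    have hM10 : M r₁ = 0 := hM0 r₁ fun z hz => hbdry z (Or.inl hz)
    have hM30 : M r₃ = 0 := hM0 r₃ fun z hz => hbdry z (Or.inr hz)
    rw [← hM2, hM10, hM30, Real.log_zero]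
    simp
  · -- nondegenerate case
    have hm1 : 0 < M r₁ := by
      rcases (hMnonneg r₁).eq_or_lt with h | h
      · exfalso
        rw [← h, Real.zero_rpow (by linarith : (1:ℝ) - t ≠ 0), zero_mul] at hM2bound
        linarith
      · exact h
    have hm3 : 0 < M r₃ := by
      rcases (hMnonneg r₃).eq_or_lt with h | h
      · exfalso
        rw [← h, Real.zero_rpow ht0.ne', mul_zero] at hM2bound
        linarith
      · exact h
    have hlog : Real.log (M r₂) ≤ (1 - t) * Real.log (M r₁) + t * Real.log (M r₃) := by
      have h := Real.log_le_log hM2 hM2bound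
      rwa [Real.log_mul (Real.rpow_pos_of_pos hm1 _).ne' (Real.rpow_pos_of_pos hm3 _).ne',
        Real.log_rpow hm1, Real.log_rpow hm3] at h
    have key := mul_le_mul_of_nonneg_left hlog hca.le
    have expand : (c - a) * ((1 - t) * Real.log (M r₁) + t * Real.log (M r₃)) =
        (c - b) * Real.log (M r₁) + (b - a) * Real.log (M r₃) := by
      linear_combination (Real.log (M r₃) - Real.log (M r₁)) * htca
    linarith [key, expand]
end

section
/- One-dimensional eigenfunction lower bound via Gronwall: let V : ℝ → ℝ be measurable and bounded, E ∈ ℝ, and ψ ∈ W^{2,2}_{loc}(ℝ) satisfy −ψ'' + Vψ = Eψ. For δ ∈ (0,1/2) define, for fixed z ∈ ℝ, f(x) = ∫_{z+x−δ}^{z+x+δ} |ψ|² dt. Then there is a constant C_δ > 0 depending only on δ such that |f'(x)| ≤ 2(C_δ + ‖V−E‖_∞) f(x), and consequently f(x) ≤ exp(2(C_δ + ‖V−E‖_∞)|x|)·f(0) for all x ∈ ℝ. -/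
open MeasureTheory Set Real intervalIntegral

lemma aux_sup (a b M : ℝ) (hab : a < b) (w w' w'' : ℝ → ℝ)
    (hw : ∀ t, HasDerivAt w (w' t) t) (hw' : ∀ t, HasDerivAt w' (w'' t) t)
    (hint : IntervalIntegrable w'' volume a b)
    (hM : ∀ t, |w'' t| ≤ M * |w t|)
    {x : ℝ} (hx : x ∈ Set.Icc a b) :
    |w' x| ≤ (18 / (b - a)^2 + M) * ∫ t in a..b, |w t| := by
  have cw : Continuous w := continuous_iff_continuousAt.mpr fun t => (hw t).continuousAt
  set L := b - a with hLdef
  have hL : 0 < L := by simp only [hLdef]; linarith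
  set Iw := ∫ t in a..b, |w t| with hIwdef
  have hIwint : IntervalIntegrable (fun t => |w t|) volume a b :=
    (cw.abs).intervalIntegrable a b
  have hIw : 0 ≤ Iw := intervalIntegral.integral_nonneg hab.le (fun t _ => abs_nonneg _)
  have h3L : 0 < L / 3 := by linarith
  have hdivnn : 0 ≤ 3 / L := div_nonneg (by norm_num) hL.le
  -- a good point in the left third
  have hthird : a < a + L/3 := by linarith
  obtain ⟨s, hs, hsmin⟩ := isCompact_Icc.exists_isMinOn (α := ℝ) (β := ℝ)
    (Set.nonempty_Icc.2 hthird.le) (cw.abs).continuousOn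
  obtain ⟨hs1, hs2⟩ := hs
  have hws : |w s| ≤ 3 / L * Iw := by
    have h1 : (∫ t in a..(a + L/3), |w s|) ≤ ∫ t in a..(a + L/3), |w t| := by
      apply intervalIntegral.integral_mono_on hthird.le
        (intervalIntegrable_const) (hIwint.mono_set (Set.uIcc_subset_uIcc
          (by rw [Set.uIcc_of_le hab.le]; exact ⟨le_refl a, hab.le⟩)
          (by rw [Set.uIcc_of_le hab.le]; constructor <;> [linarith; linarith])))
      intro t ht; exact hsmin ht
    have h2 : (∫ t in a..(a + L/3), |w t|) ≤ Iw := by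
      apply intervalIntegral.integral_mono_interval le_rfl hthird.le (by linarith)
        (Filter.Eventually.of_forall fun t => abs_nonneg _) hIwint
    rw [intervalIntegral.integral_const, smul_eq_mul] at h1
    have h3 : (L/3) * |w s| ≤ Iw := by
      calc (L/3) * |w s| = (a + L/3 - a) * |w s| := by ring
        _ ≤ Iw := h1.trans h2
    calc |w s| = 3/L * (L/3 * |w s|) := by field_simp
      _ ≤ 3/L * Iw := mul_le_mul_of_nonneg_left h3 hdivnn
  -- a good point in the right third
  have hthird' : b - L/3 < b := by linarith
  obtain ⟨u, hu, humin⟩ := isCompact_Icc.exists_isMinOn (α := ℝ) (β := ℝ)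
    (Set.nonempty_Icc.2 hthird'.le) (cw.abs).continuousOn
  obtain ⟨hu1, hu2⟩ := hu
  have hwu : |w u| ≤ 3 / L * Iw := by
    have h1 : (∫ t in (b - L/3)..b, |w u|) ≤ ∫ t in (b - L/3)..b, |w t| := by
      apply intervalIntegral.integral_mono_on hthird'.le
        (intervalIntegrable_const) (hIwint.mono_set (Set.uIcc_subset_uIcc
          (by rw [Set.uIcc_of_le hab.le]; constructor <;> [linarith; linarith])
          (by rw [Set.uIcc_of_le hab.le]; exact ⟨hab.le, le_refl b⟩)))
      intro t ht; exact humin ht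
    have h2 : (∫ t in (b - L/3)..b, |w t|) ≤ Iw := by
      apply intervalIntegral.integral_mono_interval (by linarith) hthird'.le le_rfl
        (Filter.Eventually.of_forall fun t => abs_nonneg _) hIwint
    rw [intervalIntegral.integral_const, smul_eq_mul] at h1
    have h3 : (L/3) * |w u| ≤ Iw := by
      calc (L/3) * |w u| = (b - (b - L/3)) * |w u| := by ring
        _ ≤ Iw := h1.trans h2
    calc |w u| = 3/L * (L/3 * |w u|) := by field_simp
      _ ≤ 3/L * Iw := mul_le_mul_of_nonneg_left h3 hdivnn
  have hsu : s < u := by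
    have hLL : L = b - a := hLdef
    linarith
  -- mean value theorem
  obtain ⟨ξ, hξ, hξeq⟩ := exists_hasDerivAt_eq_slope w w' hsu
    cw.continuousOn (fun y _ => hw y)
  have hξ1 : a ≤ ξ := by have := hξ.1; linarith
  have hξ2 : ξ ≤ b := by have := hξ.2; linarith
  have hξbound : |w' ξ| ≤ 18 / L^2 * Iw := by
    rw [hξeq, abs_div, abs_of_pos (by linarith : (0:ℝ) < u - s)]
    have hnum : |w u - w s| ≤ 6 / L * Iw := by
      calc |w u - w s| ≤ |w u| + |w s| := abs_sub _ _
        _ ≤ 3 / L * Iw + 3 / L * Iw := add_le_add hwu hws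
        _ = 6 / L * Iw := by ring
    have hden : L / 3 ≤ u - s := by linarith
    calc |w u - w s| / (u - s) ≤ (6 / L * Iw) / (L / 3) := by
          apply div_le_div₀ (by positivity) hnum h3L hden
      _ = 18 / L^2 * Iw := by field_simp; ring
  -- FTC from ξ to x
  have hsub : Set.uIcc ξ x ⊆ Set.uIcc a b :=
    Set.uIcc_subset_uIcc (by rw [Set.uIcc_of_le hab.le]; exact ⟨hξ1, hξ2⟩)
      (by rw [Set.uIcc_of_le hab.le]; exact hx)
  have hftc : (∫ t in ξ..x, w'' t) = w' x - w' ξ :=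
    intervalIntegral.integral_eq_sub_of_hasDerivAt (fun t _ => hw' t) (hint.mono_set hsub)
  have habs : |∫ t in ξ..x, w'' t| ≤ M * Iw := by
    set A := ∫ t in ξ..x, (fun r => |w'' r|) t with hAdef
    set B := ∫ t in a..b, (fun r => |w'' r|) t with hBdef
    have h1 : |∫ t in ξ..x, w'' t| ≤ |A| := by
      simpa [Real.norm_eq_abs] using intervalIntegral.norm_integral_le_abs_integral_norm
        (f := w'') (a := ξ) (b := x) (μ := volume)
    have h2 : |A| ≤ |B| := by
      apply intervalIntegral.abs_integral_mono_interval
      · intro t ht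
        rw [Set.mem_uIoc] at ht
        rw [Set.uIoc_of_le hab.le]
        rcases ht with ⟨h,h'⟩|⟨h,h'⟩ <;> constructor <;>
          first
          | (rcases hx with ⟨hx1,hx2⟩; linarith)
          | (rcases hx with ⟨hx1,hx2⟩; linarith)
      · exact Filter.Eventually.of_forall fun t => abs_nonneg _
      · exact hint.abs
    have h3 : B ≤ ∫ t in a..b, M * |w t| := by
      apply intervalIntegral.integral_mono_on hab.le hint.abs
        ((continuous_const.mul cw.abs).intervalIntegrable a b)
      intro t _; exact hM t
    have h4 : (∫ t in a..b, M * |w t|) = M * Iw := intervalIntegral.integral_const_mul _ _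
    have h5 : 0 ≤ B :=
      intervalIntegral.integral_nonneg hab.le fun t _ => abs_nonneg _
    rw [abs_of_nonneg h5] at h2
    linarith [h1.trans (h2.trans (h3.trans_eq h4))]
  have hfin : |w' x| ≤ |w' ξ| + |∫ t in ξ..x, w'' t| := by
    have hx' : w' x = w' ξ + (∫ t in ξ..x, w'' t) := by rw [hftc]; ring
    rw [hx']; exact abs_add_le _ _
  calc |w' x| ≤ 18 / L^2 * Iw + M * Iw := hfin.trans (add_le_add hξbound habs)
    _ = (18 / L^2 + M) * Iw := by ring

lemma aux_cs (a b : ℝ) (hab : a < b) (w : ℝ → ℝ) (cw : Continuous w) :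
    (∫ t in a..b, |w t|)^2 ≤ (b - a) * ∫ t in a..b, w t * w t := by
  set I := ∫ t in a..b, |w t| with hIdef
  set J := ∫ t in a..b, w t * w t with hJdef
  have hL : 0 < b - a := by linarith
  set r := I / (b - a) with hrdef
  have hiw : IntervalIntegrable (fun t => |w t|) volume a b := cw.abs.intervalIntegrable a b
  have hiw2 : IntervalIntegrable (fun t => w t * w t) volume a b :=
    (cw.mul cw).intervalIntegrable a b
  have h0 : 0 ≤ ∫ t in a..b, (|w t| - r)^2 :=
    intervalIntegral.integral_nonneg hab.le fun t _ => sq_nonneg _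
  have hexp : (∫ t in a..b, (|w t| - r)^2) = J - 2*r*I + r^2*(b-a) := by
    have hpt : ∀ t, (|w t| - r)^2 = w t * w t - (2*r)*|w t| + r^2 := by
      intro t
      have h := abs_mul_abs_self (w t)
      ring_nf
      nlinarith [h]
    simp only [hpt]
    rw [intervalIntegral.integral_add (f := fun t => w t * w t - 2*r*|w t|) (g := fun _ => r^2)
          (((cw.mul cw).intervalIntegrable a b).sub
          ((continuous_const.mul cw.abs).intervalIntegrable a b)) intervalIntegrable_const,
        intervalIntegral.integral_sub (f := fun t => w t * w t) (g := fun t => 2*r*|w t|)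
          ((cw.mul cw).intervalIntegrable a b)
          ((continuous_const.mul cw.abs).intervalIntegrable a b),
        intervalIntegral.integral_const_mul, intervalIntegral.integral_const, smul_eq_mul]
    ring
  rw [hexp] at h0
  have : r = I / (b - a) := hrdef
  have hr2 : r * (b - a) = I := by rw [hrdef]; field_simp
  nlinarith [mul_nonneg hL.le h0, hr2, sq_nonneg (r*(b-a) - I)]

lemma aux_main (δ : ℝ) (hδ1 : 0 < δ) (hδ2 : δ < 1/2)
    (V : ℝ → ℝ) (hV : Measurable V) (E M : ℝ) (hVE : ∀ x, |V x - E| ≤ M)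
    (ψ ψ' ψ'' : ℝ → ℂ) (hψ : ∀ x, HasDerivAt ψ (ψ' x) x)
    (hψ' : ∀ x, HasDerivAt ψ' (ψ'' x) x)
    (heq : ∀ x, -ψ'' x + (V x : ℂ) * ψ x = (E : ℂ) * ψ x)
    (a b : ℝ) (hab : b = a + 2*δ) :
    |‖ψ b‖^2 - ‖ψ a‖^2| ≤ 2 * (9/δ + M) * ∫ t in a..b, ‖ψ t‖^2 := by
  have hab' : a < b := by rw [hab]; linarith
  have hba : b - a = 2*δ := by rw [hab]; ring
  have hM0 : 0 ≤ M := (abs_nonneg _).trans (hVE 0)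
  -- real and imaginary parts
  set u : ℝ → ℝ := fun t => (ψ t).re with hu_def
  set v : ℝ → ℝ := fun t => (ψ t).im with hv_def
  set u' : ℝ → ℝ := fun t => (ψ' t).re with hu'_def
  set v' : ℝ → ℝ := fun t => (ψ' t).im with hv'_def
  have hU : ∀ t, HasDerivAt u (u' t) t := by
    intro t
    exact (Complex.reCLM.hasFDerivAt.comp_hasDerivAt t (hψ t))
  have hVv : ∀ t, HasDerivAt v (v' t) t := by
    intro t
    exact (Complex.imCLM.hasFDerivAt.comp_hasDerivAt t (hψ t))
  have hU' : ∀ t, HasDerivAt u' ((ψ'' t).re) t := by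
    intro t
    exact (Complex.reCLM.hasFDerivAt.comp_hasDerivAt t (hψ' t))
  have hV' : ∀ t, HasDerivAt v' ((ψ'' t).im) t := by
    intro t
    exact (Complex.imCLM.hasFDerivAt.comp_hasDerivAt t (hψ' t))
  have cu : Continuous u := continuous_iff_continuousAt.mpr fun t => (hU t).continuousAt
  have cv : Continuous v := continuous_iff_continuousAt.mpr fun t => (hVv t).continuousAt
  have cu' : Continuous u' := continuous_iff_continuousAt.mpr fun t => (hU' t).continuousAt
  have cv' : Continuous v' := continuous_iff_continuousAt.mpr fun t => (hV' t).continuousAt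
  -- the eigenvalue equation
  have hE : ∀ t, ψ'' t = ((V t - E : ℝ) : ℂ) * ψ t := by
    intro t
    have h := heq t
    push_cast
    linear_combination -h
  have hre : ∀ t, (ψ'' t).re = (V t - E) * u t := by
    intro t; rw [hE t]; exact Complex.re_ofReal_mul _ _
  have him : ∀ t, (ψ'' t).im = (V t - E) * v t := by
    intro t; rw [hE t]; exact Complex.im_ofReal_mul _ _
  have hMu : ∀ t, |(ψ'' t).re| ≤ M * |u t| := by
    intro t; rw [hre t, abs_mul]
    exact mul_le_mul_of_nonneg_right (hVE t) (abs_nonneg _)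
  have hMv : ∀ t, |(ψ'' t).im| ≤ M * |v t| := by
    intro t; rw [him t, abs_mul]
    exact mul_le_mul_of_nonneg_right (hVE t) (abs_nonneg _)
  -- integrability of the second derivatives
  have hintu : IntervalIntegrable (fun t => (ψ'' t).re) volume a b := by
    apply IntervalIntegrable.mono_fun' ((continuous_const.mul cu.abs).intervalIntegrable a b)
    · have : Measurable fun t => (V t - E) * u t :=
        (hV.sub measurable_const).mul cu.measurable
      have : Measurable fun t => (ψ'' t).re := by
        simpa only [← hre] using this
      exact this.aestronglyMeasurable.restrict
    · exact Filter.Eventually.of_forall fun t => by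
        simpa [Real.norm_eq_abs] using hMu t
  have hintv : IntervalIntegrable (fun t => (ψ'' t).im) volume a b := by
    apply IntervalIntegrable.mono_fun' ((continuous_const.mul cv.abs).intervalIntegrable a b)
    · have : Measurable fun t => (V t - E) * v t :=
        (hV.sub measurable_const).mul cv.measurable
      have : Measurable fun t => (ψ'' t).im := by
        simpa only [← him] using this
      exact this.aestronglyMeasurable.restrict
    · exact Filter.Eventually.of_forall fun t => by
        simpa [Real.norm_eq_abs] using hMv t
  -- sup bounds on u', v'
  set c : ℝ := 18 / (b - a)^2 + M with hc_def
  have hc0 : 0 ≤ c := by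
    have h1 : (0:ℝ) ≤ 18 / (b-a)^2 := div_nonneg (by norm_num) (sq_nonneg _)
    rw [hc_def]; linarith
  set Iu := ∫ t in a..b, |u t| with hIu_def
  set Iv := ∫ t in a..b, |v t| with hIv_def
  have hIu0 : 0 ≤ Iu := intervalIntegral.integral_nonneg hab'.le fun t _ => abs_nonneg _
  have hIv0 : 0 ≤ Iv := intervalIntegral.integral_nonneg hab'.le fun t _ => abs_nonneg _
  have hsupu : ∀ y ∈ Set.Icc a b, |u' y| ≤ c * Iu := fun y hy =>
    aux_sup a b M hab' u u' (fun t => (ψ'' t).re) hU hU' hintu hMu hy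
  have hsupv : ∀ y ∈ Set.Icc a b, |v' y| ≤ c * Iv := fun y hy =>
    aux_sup a b M hab' v v' (fun t => (ψ'' t).im) hVv hV' hintv hMv hy
  -- the local mass function
  have hgre : ∀ t, ‖ψ t‖^2 = u t * u t + v t * v t := by
    intro t
    rw [Complex.sq_norm, Complex.normSq_apply]
  have hg' : ∀ t, HasDerivAt (fun t => ‖ψ t‖^2)
      (u' t * u t + u t * u' t + (v' t * v t + v t * v' t)) t := by
    intro t
    have h1 : HasDerivAt (fun t => u t * u t + v t * v t)
        (u' t * u t + u t * u' t + (v' t * v t + v t * v' t)) t :=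
      ((hU t).mul (hU t)).add ((hVv t).mul (hVv t))
    have : (fun t => ‖ψ t‖^2) = fun t => u t * u t + v t * v t := funext hgre
    rw [this]
    exact h1
  have hftc : (∫ t in a..b, (u' t * u t + u t * u' t + (v' t * v t + v t * v' t)))
      = ‖ψ b‖^2 - ‖ψ a‖^2 :=
    intervalIntegral.integral_eq_sub_of_hasDerivAt (fun t _ => hg' t)
      ((((cu'.mul cu).add (cu.mul cu')).add ((cv'.mul cv).add (cv.mul cv'))).intervalIntegrable a b)
  -- bound the integral
  have hbd : |‖ψ b‖^2 - ‖ψ a‖^2| ≤ 2*(c*Iu)*Iu + 2*(c*Iv)*Iv := by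
    rw [← hftc]
    have h1 : |∫ t in a..b, (u' t * u t + u t * u' t + (v' t * v t + v t * v' t))|
        ≤ ∫ t in a..b, |u' t * u t + u t * u' t + (v' t * v t + v t * v' t)| :=
      intervalIntegral.abs_integral_le_integral_abs hab'.le
    have h2 : (∫ t in a..b, |u' t * u t + u t * u' t + (v' t * v t + v t * v' t)|)
        ≤ ∫ t in a..b, (2*(c*Iu)*|u t| + 2*(c*Iv)*|v t|) := by
      apply intervalIntegral.integral_mono_on hab'.le
        ((((cu'.mul cu).add (cu.mul cu')).add
          ((cv'.mul cv).add (cv.mul cv'))).abs.intervalIntegrable a b)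
        (((continuous_const.mul cu.abs).add (continuous_const.mul cv.abs)).intervalIntegrable a b)
      intro t ht
      have e1 : |u' t * u t + u t * u' t + (v' t * v t + v t * v' t)|
          ≤ 2*(|u' t| * |u t|) + 2*(|v' t| * |v t|) := by
        calc |u' t * u t + u t * u' t + (v' t * v t + v t * v' t)|
            ≤ |u' t * u t + u t * u' t| + |v' t * v t + v t * v' t| := abs_add_le _ _
          _ ≤ (|u' t * u t| + |u t * u' t|) + (|v' t * v t| + |v t * v' t|) :=
              add_le_add (abs_add_le _ _) (abs_add_le _ _)
          _ = 2*(|u' t| * |u t|) + 2*(|v' t| * |v t|) := by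
              rw [abs_mul, abs_mul, abs_mul, abs_mul]; ring
      have e2 : |u' t| * |u t| ≤ (c*Iu) * |u t| :=
        mul_le_mul_of_nonneg_right (hsupu t ht) (abs_nonneg _)
      have e3 : |v' t| * |v t| ≤ (c*Iv) * |v t| :=
        mul_le_mul_of_nonneg_right (hsupv t ht) (abs_nonneg _)
      calc |u' t * u t + u t * u' t + (v' t * v t + v t * v' t)|
          ≤ 2*(|u' t| * |u t|) + 2*(|v' t| * |v t|) := e1
        _ ≤ 2*((c*Iu)*|u t|) + 2*((c*Iv)*|v t|) := by linarith
        _ = 2*(c*Iu)*|u t| + 2*(c*Iv)*|v t| := by ring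
    have h3 : (∫ t in a..b, (2*(c*Iu)*|u t| + 2*(c*Iv)*|v t|))
        = 2*(c*Iu)*Iu + 2*(c*Iv)*Iv := by
      rw [intervalIntegral.integral_add (f := fun t => 2*(c*Iu)*|u t|) (g := fun t => 2*(c*Iv)*|v t|)
            ((continuous_const.mul cu.abs).intervalIntegrable a b)
            ((continuous_const.mul cv.abs).intervalIntegrable a b),
          intervalIntegral.integral_const_mul, intervalIntegral.integral_const_mul]
    linarith [h1.trans (h2.trans_eq h3)]
  -- Cauchy-Schwarz
  have hcsu : Iu^2 ≤ (b - a) * ∫ t in a..b, u t * u t := aux_cs a b hab' u cu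
  have hcsv : Iv^2 ≤ (b - a) * ∫ t in a..b, v t * v t := aux_cs a b hab' v cv
  have hsplit : (∫ t in a..b, ‖ψ t‖^2)
      = (∫ t in a..b, u t * u t) + ∫ t in a..b, v t * v t := by
    rw [← intervalIntegral.integral_add (f := fun t => u t * u t) (g := fun t => v t * v t)
          ((cu.mul cu).intervalIntegrable a b)
          ((cv.mul cv).intervalIntegrable a b)]
    congr 1
    exact funext hgre
  have hint0 : 0 ≤ ∫ t in a..b, ‖ψ t‖^2 :=
    intervalIntegral.integral_nonneg hab'.le fun t _ => by positivity
  have huu0 : 0 ≤ ∫ t in a..b, u t * u t :=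
    intervalIntegral.integral_nonneg hab'.le fun t _ => mul_self_nonneg _
  have hvv0 : 0 ≤ ∫ t in a..b, v t * v t :=
    intervalIntegral.integral_nonneg hab'.le fun t _ => mul_self_nonneg _
  -- put it together
  have key : |‖ψ b‖^2 - ‖ψ a‖^2| ≤ 2*c*(b-a) * ∫ t in a..b, ‖ψ t‖^2 := by
    have : 2*(c*Iu)*Iu + 2*(c*Iv)*Iv = 2*c*(Iu^2 + Iv^2) := by ring
    rw [this] at hbd
    have h4 : Iu^2 + Iv^2 ≤ (b-a) * ∫ t in a..b, ‖ψ t‖^2 := by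
      rw [hsplit]; linarith
    calc |‖ψ b‖^2 - ‖ψ a‖^2| ≤ 2*c*(Iu^2 + Iv^2) := hbd
      _ ≤ 2*c*((b-a) * ∫ t in a..b, ‖ψ t‖^2) := by
          apply mul_le_mul_of_nonneg_left h4 (by linarith)
      _ = 2*c*(b-a) * ∫ t in a..b, ‖ψ t‖^2 := by ring
  have hcoef : 2*c*(b-a) ≤ 2*(9/δ + M) := by
    rw [hc_def, hba]
    have h1 : 18 / (2*δ)^2 * (2*δ) = 9/δ := by
      field_simp; ring
    have h2 : M * (2*δ) ≤ M := by nlinarith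
    nlinarith [h1]
  calc |‖ψ b‖^2 - ‖ψ a‖^2| ≤ 2*c*(b-a) * ∫ t in a..b, ‖ψ t‖^2 := key
    _ ≤ 2*(9/δ + M) * ∫ t in a..b, ‖ψ t‖^2 :=
        mul_le_mul_of_nonneg_right hcoef hint0

/-- One-dimensional eigenfunction bound via Gronwall: for a solution of
`-ψ'' + Vψ = Eψ` with bounded potential, the local `L²`-mass
`f(x) = ∫_{z+x-δ}^{z+x+δ} |ψ|²` satisfies `|f'(x)| ≤ 2(C_δ + ‖V-E‖_∞) f(x)` and hence
`f(x) ≤ exp(2(C_δ + ‖V-E‖_∞)|x|) f(0)`. -/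
theorem stmt_14 (δ : ℝ) (hδ : δ ∈ Set.Ioo (0:ℝ) (1/2)) :
    ∃ Cδ > (0:ℝ), ∀ (V : ℝ → ℝ) (_ : Measurable V) (E M : ℝ) (_ : ∀ x, |V x - E| ≤ M)
      (ψ ψ' ψ'' : ℝ → ℂ)
      (_ : ∀ x, HasDerivAt ψ (ψ' x) x) (_ : ∀ x, HasDerivAt ψ' (ψ'' x) x)
      (_ : ∀ x, -ψ'' x + (V x : ℂ) * ψ x = (E : ℂ) * ψ x)
      (z : ℝ) (f : ℝ → ℝ)
      (_ : ∀ x, f x = ∫ t in Set.Ioo (z + x - δ) (z + x + δ), ‖ψ t‖ ^ 2),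
      (∀ x, |deriv f x| ≤ 2 * (Cδ + M) * f x) ∧
      (∀ x, f x ≤ Real.exp (2 * (Cδ + M) * |x|) * f 0) := by
  obtain ⟨hδ1, hδ2⟩ := hδ
  refine ⟨9/δ, by positivity, ?_⟩
  intro V hV E M hVE ψ ψ' ψ'' hψ hψ' heq z f hf
  have hM0 : 0 ≤ M := (abs_nonneg _).trans (hVE 0)
  set g : ℝ → ℝ := fun t => ‖ψ t‖^2 with hg_def
  have cψ : Continuous ψ := continuous_iff_continuousAt.mpr fun t => (hψ t).continuousAt
  have cg : Continuous g := (cψ.norm).pow 2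
  set F : ℝ → ℝ := fun r => ∫ s in (0:ℝ)..r, g s with hF_def
  have hF : ∀ r, HasDerivAt F (g r) r := fun r =>
    (cg.integral_hasStrictDerivAt 0 r).hasDerivAt
  -- rewrite f
  have hfeq : ∀ x, f x = F (z + x + δ) - F (z + x - δ) := by
    intro x
    rw [hf x]
    rw [intervalIntegral.integral_interval_sub_left (cg.intervalIntegrable 0 (z+x+δ))
      (cg.intervalIntegrable 0 (z+x-δ))]
    rw [intervalIntegral.integral_of_le (by linarith : z + x - δ ≤ z + x + δ)]
    rw [MeasureTheory.integral_Ioc_eq_integral_Ioo]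
  have hfint : ∀ x, f x = ∫ t in (z+x-δ)..(z+x+δ), g t := by
    intro x
    rw [hfeq x, intervalIntegral.integral_interval_sub_left
      (cg.intervalIntegrable (μ := volume) 0 (z+x+δ))
      (cg.intervalIntegrable (μ := volume) 0 (z+x-δ))]
  have hfpos : ∀ x, 0 ≤ f x := by
    intro x
    rw [hfint x]
    exact intervalIntegral.integral_nonneg (by linarith) fun t _ => by positivity
  -- derivative of f
  have hfd : ∀ x, HasDerivAt f (g (z+x+δ) - g (z+x-δ)) x := by
    intro x
    have hfun : f = fun x => F (z + x + δ) - F (z + x - δ) := funext hfeq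
    rw [hfun]
    have hx1 : HasDerivAt (fun x : ℝ => z + x + δ) 1 x := by
      simpa using ((hasDerivAt_id x).const_add z).add_const δ
    have hx2 : HasDerivAt (fun x : ℝ => z + x - δ) 1 x := by
      simpa using ((hasDerivAt_id x).const_add z).sub_const δ
    have h1 : HasDerivAt (fun x : ℝ => F (z + x + δ)) (g (z+x+δ)) x := by
      have := (hF (z+x+δ)).comp x hx1; rw [mul_one] at this; exact this
    have h2 : HasDerivAt (fun x : ℝ => F (z + x - δ)) (g (z+x-δ)) x := by
      have := (hF (z+x-δ)).comp x hx2; rw [mul_one] at this; exact this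
    exact h1.sub h2
  have hderiv : ∀ x, deriv f x = g (z+x+δ) - g (z+x-δ) := fun x => (hfd x).deriv
  -- the derivative bound
  have bound1 : ∀ x, |deriv f x| ≤ 2 * (9/δ + M) * f x := by
    intro x
    rw [hderiv x, hfint x]
    exact aux_main δ hδ1 hδ2 V hV E M hVE ψ ψ' ψ'' hψ hψ' heq
      (z+x-δ) (z+x+δ) (by ring)
  refine ⟨bound1, ?_⟩
  -- Gronwall
  set K := 2 * (9/δ + M) with hK_def
  have hK0 : 0 ≤ K := by
    have : 0 < 9/δ := by positivity
    rw [hK_def]; linarith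
  have hup : ∀ x, deriv f x ≤ K * f x := fun x => (abs_le.1 (bound1 x)).2
  have hlo : ∀ x, -(K * f x) ≤ deriv f x := fun x => (abs_le.1 (bound1 x)).1
  intro x
  rcases le_or_gt 0 x with hx | hx
  · -- x ≥ 0 : use antitone of f t * exp(-K t)
    set φ : ℝ → ℝ := fun t => f t * Real.exp (-(K*t)) with hφ_def
    have hφd : ∀ t, HasDerivAt φ
        (deriv f t * Real.exp (-(K*t)) + f t * (Real.exp (-(K*t)) * (-K))) t := by
      intro t
      have he : HasDerivAt (fun t : ℝ => Real.exp (-(K*t))) (Real.exp (-(K*t)) * (-K)) t := by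
        have : HasDerivAt (fun t : ℝ => -(K*t)) (-K) t := by
          have h := ((hasDerivAt_id' t).const_mul K).neg; rw [mul_one] at h; exact h
        exact this.exp
      exact ((hfd t).congr_deriv (hderiv t).symm).mul he
    have hanti : Antitone φ := by
      apply antitone_of_deriv_nonpos (fun t => (hφd t).differentiableAt)
      intro t
      rw [(hφd t).deriv]
      have e1 : 0 < Real.exp (-(K*t)) := Real.exp_pos _
      nlinarith [hup t, mul_le_mul_of_nonneg_right (hup t) e1.le]
    have h0 : φ x ≤ φ 0 := hanti hx
    have : f x * Real.exp (-(K*x)) ≤ f 0 := by simpa [hφ_def] using h0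
    have h2 := mul_le_mul_of_nonneg_right this (Real.exp_pos (K*x)).le
    calc f x = f x * Real.exp (-(K*x)) * Real.exp (K*x) := by
          rw [mul_assoc, ← Real.exp_add]; simp
      _ ≤ f 0 * Real.exp (K*x) := h2
      _ = Real.exp (K * |x|) * f 0 := by rw [abs_of_nonneg hx]; ring
  · -- x < 0 : use monotone of f t * exp(K t)
    set φ : ℝ → ℝ := fun t => f t * Real.exp (K*t) with hφ_def
    have hφd : ∀ t, HasDerivAt φ
        (deriv f t * Real.exp (K*t) + f t * (Real.exp (K*t) * K)) t := by
      intro t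
      have he : HasDerivAt (fun t : ℝ => Real.exp (K*t)) (Real.exp (K*t) * K) t := by
        have : HasDerivAt (fun t : ℝ => K*t) K t := by
          simpa using ((hasDerivAt_id t).const_mul K)
        exact this.exp
      exact ((hfd t).congr_deriv (hderiv t).symm).mul he
    have hmono : Monotone φ := by
      apply monotone_of_deriv_nonneg (fun t => (hφd t).differentiableAt)
      intro t
      rw [(hφd t).deriv]
      have e1 : 0 < Real.exp (K*t) := Real.exp_pos _
      nlinarith [hlo t, mul_le_mul_of_nonneg_right (hlo t) e1.le]
    have h0 : φ x ≤ φ 0 := hmono hx.le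
    have : f x * Real.exp (K*x) ≤ f 0 := by simpa [hφ_def] using h0
    have h2 := mul_le_mul_of_nonneg_right this (Real.exp_pos (-(K*x))).le
    calc f x = f x * Real.exp (K*x) * Real.exp (-(K*x)) := by
          rw [mul_assoc, ← Real.exp_add]; simp
      _ ≤ f 0 * Real.exp (-(K*x)) := h2
      _ = Real.exp (K * |x|) * f 0 := by rw [abs_of_neg hx]; ring_nf
end
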